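/- Conditioning decreases min-entropy by at most the probability penalty: for a tripartite density matrix ρ_{ABC} and an operator M on C with M†M ≤ I, setting p = Tr(M ρ M†) > 0 and ρ̂ = M ρ M† / p, the conditional min-entropy satisfies H_min(A|B)_{ρ̂} ≥ H_min(A|B)_ρ − log(1/p). -/

import Mathlib

open Matrix Kronecker
open scoped ComplexOrder

/-- Max-divergence `D_max(A‖B) = min{λ : A ≤ 2^λ B}` in the Löwner order. -/
noncomputable def dmax {n : Type*} [Fintype n] (A B : Matrix n n ℂ) : ℝ :=
  sInf {l : ℝ | ((2 : ℝ) ^ l • B - A).PosSemidef}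

/-- Conditional min-entropy `H_min(A|B)_ρ = −inf_{σ_B} D_max(ρ_{AB} ‖ 1_A ⊗ σ_B)`,
the infimum over density matrices `σ_B`. -/
noncomputable def hmin {α β : Type*} [Fintype α] [Fintype β] [DecidableEq α] [DecidableEq β]
    (ρ : Matrix (α × β) (α × β) ℂ) : ℝ :=
  - sInf {x : ℝ | ∃ σ : Matrix β β ℂ, σ.PosSemidef ∧ σ.trace = 1 ∧
      x = dmax ρ ((1 : Matrix α α ℂ) ⊗ₖ σ)}

/-- Partial trace over the second (right) tensor factor. -/
noncomputable def ptraceRight {α β : Type*} [Fintype β]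
    (ρ : Matrix (α × β) (α × β) ℂ) : Matrix α α ℂ :=
  Matrix.of fun a a' => ∑ b, ρ (a, b) (a', b)

section Aux

set_option linter.unusedSectionVars false

lemma HminAux.psd_trace_nonneg {n : Type*} [Fintype n] {A : Matrix n n ℂ} (hA : A.PosSemidef) :
    0 ≤ A.trace := by
  classical
  refine Finset.sum_nonneg fun i _ => ?_
  have := hA.dotProduct_mulVec_nonneg (Pi.single i 1)
  simpa [dotProduct, mulVec, Pi.single_apply] using this

lemma HminAux.psd_diag_nonneg {n : Type*} [Fintype n] {A : Matrix n n ℂ} (hA : A.PosSemidef)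
    (i : n) : 0 ≤ A i i := by
  classical
  have := hA.dotProduct_mulVec_nonneg (Pi.single i 1)
  simpa [dotProduct, mulVec, Pi.single_apply] using this

lemma HminAux.psd_smul {n : Type*} [Fintype n] {A : Matrix n n ℂ} (hA : A.PosSemidef) {c : ℂ}
    (hc : 0 ≤ c) : (c • A).PosSemidef := by
  refine .of_dotProduct_mulVec_nonneg ?_ fun x => ?_
  · have hcr : (starRingEnd ℂ) c = c :=
      Complex.conj_eq_iff_im.mpr (Complex.nonneg_iff.mp hc).2.symm
    unfold Matrix.IsHermitian
    rw [conjTranspose_smul, Complex.star_def, hcr, hA.1.eq]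
  · rw [smul_mulVec, dotProduct_smul, smul_eq_mul]
    exact mul_nonneg hc (hA.dotProduct_mulVec_nonneg x)

lemma HminAux.real_smul_eq {m n : Type*} (r : ℝ) (A : Matrix m n ℂ) :
    r • A = (r : ℂ) • A := by
  ext i j
  simp [Matrix.smul_apply, Complex.real_smul]

lemma HminAux.psd_real_smul {n : Type*} [Fintype n] {A : Matrix n n ℂ} (hA : A.PosSemidef) {r : ℝ}
    (hr : 0 ≤ r) : (r • A).PosSemidef := by
  rw [HminAux.real_smul_eq]
  exact HminAux.psd_smul hA (by exact_mod_cast Complex.zero_le_real.mpr hr)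

lemma HminAux.sum_comm3 {γ : Type*} [Fintype γ] (f : γ → γ → γ → ℂ) :
    (∑ c, ∑ e, ∑ d, f c e d) = ∑ d, ∑ e, ∑ c, f c e d :=
  calc (∑ c, ∑ e, ∑ d, f c e d)
      = ∑ c, ∑ d, ∑ e, f c e d := Finset.sum_congr rfl (fun _ _ => Finset.sum_comm)
    _ = ∑ d, ∑ c, ∑ e, f c e d := Finset.sum_comm
    _ = ∑ d, ∑ e, ∑ c, f c e d := Finset.sum_congr rfl (fun _ _ => Finset.sum_comm)

variable {α β γ : Type*} [Fintype α] [Fintype β] [Fintype γ]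
variable [DecidableEq α] [DecidableEq β] [DecidableEq γ]

lemma HminAux.ptraceRight_smul (c : ℂ) (ρ : Matrix (α × β) (α × β) ℂ) :
    ptraceRight (c • ρ) = c • ptraceRight ρ := by
  ext a a'
  simp [ptraceRight, Finset.mul_sum]

lemma HminAux.ptraceRight_trace (ρ : Matrix (α × β) (α × β) ℂ) :
    (ptraceRight ρ).trace = ρ.trace := by
  simp [Matrix.trace, Matrix.diag, ptraceRight, Fintype.sum_prod_type]

lemma HminAux.ptraceRight_posSemidef {ρ : Matrix (α × β) (α × β) ℂ} (hρ : ρ.PosSemidef) :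
    (ptraceRight ρ).PosSemidef := by
  refine .of_dotProduct_mulVec_nonneg ?_ ?_
  · ext a a'
    simp only [conjTranspose_apply, ptraceRight, of_apply, star_sum]
    exact Finset.sum_congr rfl fun b _ => hρ.1.apply _ _
  · intro x
    have key : star x ⬝ᵥ (ptraceRight ρ) *ᵥ x
        = ∑ b, star (fun ab : α × β => if ab.2 = b then x ab.1 else 0) ⬝ᵥ
            ρ *ᵥ (fun ab : α × β => if ab.2 = b then x ab.1 else 0) := by
      simp only [dotProduct, mulVec, ptraceRight, of_apply, Pi.star_apply, Fintype.sum_prod_type,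
        apply_ite (star : ℂ → ℂ), star_zero, ite_mul, zero_mul, mul_ite, mul_zero,
        Finset.sum_ite_eq', Finset.mem_univ, if_true, Finset.mul_sum, Finset.sum_mul,
        Finset.sum_ite_irrel, Finset.sum_const_zero]
      conv_rhs => rw [Finset.sum_comm]
      exact Finset.sum_congr rfl fun a _ => Finset.sum_comm
    rw [key]
    exact Finset.sum_nonneg fun b _ => hρ.dotProduct_mulVec_nonneg _

lemma HminAux.conj_entry {δ : Type*} [Fintype δ] [DecidableEq δ]
    (M : Matrix γ γ ℂ) (ρ : Matrix (δ × γ) (δ × γ) ℂ) (x x' : δ) :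
    ptraceRight (((1 : Matrix δ δ ℂ) ⊗ₖ M) * ρ * ((1 : Matrix δ δ ℂ) ⊗ₖ M)ᴴ) x x'
      = ∑ d, ∑ e, (Mᴴ * M) e d * ρ (x, d) (x', e) := by
  simp only [ptraceRight, of_apply, mul_apply, conjTranspose_apply, kroneckerMap_apply,
    one_apply, Fintype.sum_prod_type, ite_mul, zero_mul, mul_ite, mul_zero,
    Finset.sum_ite_irrel, Finset.sum_const_zero, Finset.sum_ite_eq', Finset.sum_ite_eq,
    Finset.mem_univ, if_true, star_mul', star_one, apply_ite (star : ℂ → ℂ),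
    one_mul, mul_one, Finset.sum_mul]
  simp only [star_zero, mul_zero, Finset.sum_const_zero, Finset.sum_ite_eq, Finset.mem_univ,
    if_true]
  rw [HminAux.sum_comm3]
  refine Finset.sum_congr rfl fun d _ => Finset.sum_congr rfl fun e _ =>
    Finset.sum_congr rfl fun c _ => by ring

lemma HminAux.key_identity {δ : Type*} [Fintype δ] [DecidableEq δ]
    (M N : Matrix γ γ ℂ) (hMN : Mᴴ * M + Nᴴ * N = 1)
    (ρ : Matrix (δ × γ) (δ × γ) ℂ) :
    ptraceRight (((1 : Matrix δ δ ℂ) ⊗ₖ M) * ρ * ((1 : Matrix δ δ ℂ) ⊗ₖ M)ᴴ)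
      + ptraceRight (((1 : Matrix δ δ ℂ) ⊗ₖ N) * ρ * ((1 : Matrix δ δ ℂ) ⊗ₖ N)ᴴ)
      = ptraceRight ρ := by
  ext x x'
  rw [Matrix.add_apply, HminAux.conj_entry, HminAux.conj_entry]
  have h1 : (∑ d, ∑ e, (Mᴴ * M) e d * ρ (x, d) (x', e))
      + (∑ d, ∑ e, (Nᴴ * N) e d * ρ (x, d) (x', e)) = ∑ d, ρ (x, d) (x', d) := by
    rw [← Finset.sum_add_distrib]
    refine Finset.sum_congr rfl fun d _ => ?_
    rw [← Finset.sum_add_distrib]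
    have h2 : ∀ e, (Mᴴ * M) e d * ρ (x, d) (x', e) + (Nᴴ * N) e d * ρ (x, d) (x', e)
        = (1 : Matrix γ γ ℂ) e d * ρ (x, d) (x', e) := by
      intro e
      rw [← add_mul, ← Matrix.add_apply, hMN]
    simp only [h2, one_apply, ite_mul, one_mul, zero_mul, Finset.sum_ite_eq,
      Finset.sum_ite_eq', Finset.mem_univ, if_true]
  rw [h1]
  rfl

open scoped MatrixOrder in
lemma HminAux.exists_sqrt {n : Type*} [Fintype n] [DecidableEq n] {A : Matrix n n ℂ}
    (hA : A.PosSemidef) : ∃ B : Matrix n n ℂ, A = Bᴴ * B := by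
  obtain ⟨B, hB⟩ := CStarAlgebra.nonneg_iff_eq_star_mul_self.mp hA.nonneg
  exact ⟨B, hB⟩

/-- `A ≤ 1` for a PSD matrix of trace one. -/
lemma HminAux.one_sub_psd {n : Type*} [Fintype n] [DecidableEq n] {A : Matrix n n ℂ}
    (hA : A.PosSemidef) (htr : A.trace = 1) : ((1 : Matrix n n ℂ) - A).PosSemidef := by
  obtain ⟨B, rfl⟩ := HminAux.exists_sqrt hA
  refine .of_dotProduct_mulVec_nonneg (isHermitian_one.sub (isHermitian_conjTranspose_mul_self B)) fun x => ?_
  have h1 : star x ⬝ᵥ ((1 - Bᴴ * B) *ᵥ x) = star x ⬝ᵥ x - star (B *ᵥ x) ⬝ᵥ (B *ᵥ x) := by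
    rw [sub_mulVec, dotProduct_sub, one_mulVec, ← mulVec_mulVec, dotProduct_mulVec,
      ← star_mulVec]
  rw [h1]
  have hdot : ∀ (v : n → ℂ), star v ⬝ᵥ v = ((∑ i, Complex.normSq (v i) : ℝ) : ℂ) := by
    intro v
    push_cast
    simp [dotProduct, Complex.normSq_eq_conj_mul_self]
  -- trace as a real sum
  have htr' : (∑ i, ∑ j, Complex.normSq (B j i) : ℝ) = 1 := by
    have : (Bᴴ * B).trace = ((∑ i, ∑ j, Complex.normSq (B j i) : ℝ) : ℂ) := by
      push_cast
      simp [Matrix.trace, Matrix.diag, mul_apply, conjTranspose_apply,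
        Complex.normSq_eq_conj_mul_self]
    rw [this] at htr
    exact_mod_cast htr
  have hCS : (∑ i, Complex.normSq ((B *ᵥ x) i) : ℝ) ≤ ∑ i, Complex.normSq (x i) := by
    have hrow : ∀ i, Complex.normSq ((B *ᵥ x) i)
        ≤ (∑ j, Complex.normSq (B i j)) * ∑ j, Complex.normSq (x j) := by
      intro i
      have h2 : ‖(B *ᵥ x) i‖ ≤ ∑ j, ‖B i j‖ * ‖x j‖ := by
        rw [mulVec, dotProduct]
        refine (norm_sum_le _ _).trans ?_
        exact le_of_eq (Finset.sum_congr rfl fun j _ => norm_mul _ _)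
      have h3 : (∑ j, ‖B i j‖ * ‖x j‖) ^ 2
          ≤ (∑ j, ‖B i j‖ ^ 2) * ∑ j, ‖x j‖ ^ 2 :=
        Finset.sum_mul_sq_le_sq_mul_sq _ _ _
      have h4 : Complex.normSq ((B *ᵥ x) i) = ‖(B *ᵥ x) i‖ ^ 2 :=
        (Complex.sq_norm _).symm
      have h5 : ‖(B *ᵥ x) i‖ ^ 2
          ≤ (∑ j, ‖B i j‖ * ‖x j‖) ^ 2 := by
        refine pow_le_pow_left₀ (norm_nonneg _) h2 2
      calc Complex.normSq ((B *ᵥ x) i) = ‖(B *ᵥ x) i‖ ^ 2 := h4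
        _ ≤ (∑ j, ‖B i j‖ * ‖x j‖) ^ 2 := h5
        _ ≤ (∑ j, ‖B i j‖ ^ 2) * ∑ j, ‖x j‖ ^ 2 := h3
        _ = (∑ j, Complex.normSq (B i j)) * ∑ j, Complex.normSq (x j) := by
            simp [Complex.sq_norm]
    calc (∑ i, Complex.normSq ((B *ᵥ x) i) : ℝ)
        ≤ ∑ i, (∑ j, Complex.normSq (B i j)) * ∑ j, Complex.normSq (x j) :=
          Finset.sum_le_sum fun i _ => hrow i
      _ = (∑ i, ∑ j, Complex.normSq (B i j)) * ∑ j, Complex.normSq (x j) := by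
          rw [Finset.sum_mul]
      _ = 1 * ∑ j, Complex.normSq (x j) := by
          rw [← htr']
          congr 1
          exact Finset.sum_comm
      _ = ∑ j, Complex.normSq (x j) := one_mul _
  rw [hdot x, hdot (B *ᵥ x), ← Complex.ofReal_sub]
  rw [Complex.zero_le_real]
  linarith

end Aux

/-- Conditioning on a measurement outcome on `C` decreases the conditional
min-entropy `H_min(A|B)` by at most `log(1/p)`, where `p` is the outcome
probability. -/
theorem hmin_measurement_penalty {α β γ : Type*}
    [Fintype α] [DecidableEq α] [Fintype β] [DecidableEq β] [Fintype γ] [DecidableEq γ]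
    (ρ : Matrix ((α × β) × γ) ((α × β) × γ) ℂ)
    (hρ : ρ.PosSemidef) (hρtr : ρ.trace = 1)
    (M : Matrix γ γ ℂ)
    (hM : ((1 : Matrix γ γ ℂ) - Mᴴ * M).PosSemidef)
    (p : ℝ) (hp : 0 < p)
    (htr : (((1 : Matrix (α × β) (α × β) ℂ) ⊗ₖ M) * ρ *
        ((1 : Matrix (α × β) (α × β) ℂ) ⊗ₖ M)ᴴ).trace = (p : ℂ)) :
    hmin (ptraceRight (((p : ℂ))⁻¹ •
        (((1 : Matrix (α × β) (α × β) ℂ) ⊗ₖ M) * ρ *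
          ((1 : Matrix (α × β) (α × β) ℂ) ⊗ₖ M)ᴴ)))
      ≥ hmin (ptraceRight ρ) - Real.logb 2 (1 / p) := by
  classical
  have hp' : (p : ℂ) ≠ 0 := by exact_mod_cast hp.ne'
  set c := Real.logb 2 (1 / p) with hcdef
  set Q := ((1 : Matrix (α × β) (α × β) ℂ) ⊗ₖ M) * ρ *
      ((1 : Matrix (α × β) (α × β) ℂ) ⊗ₖ M)ᴴ with hQdef
  obtain ⟨N, hNeq⟩ := HminAux.exists_sqrt hM
  have hMN : Mᴴ * M + Nᴴ * N = 1 := by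
    rw [← hNeq]
    abel
  set ρAB := ptraceRight ρ with hρABdef
  set Pp := ptraceRight Q with hPpdef
  set T := ptraceRight (((1 : Matrix (α × β) (α × β) ℂ) ⊗ₖ N) * ρ *
      ((1 : Matrix (α × β) (α × β) ℂ) ⊗ₖ N)ᴴ) with hTdef
  have hkey : Pp + T = ρAB := HminAux.key_identity M N hMN ρ
  have hQpsd : Q.PosSemidef := hρ.mul_mul_conjTranspose_same _
  have hPp : Pp.PosSemidef := HminAux.ptraceRight_posSemidef hQpsd
  have hT : T.PosSemidef :=
    HminAux.ptraceRight_posSemidef (hρ.mul_mul_conjTranspose_same _)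
  have hρABpsd : ρAB.PosSemidef := HminAux.ptraceRight_posSemidef hρ
  have hρABtr : ρAB.trace = 1 := (HminAux.ptraceRight_trace ρ).trans hρtr
  have hPptr : Pp.trace = (p : ℂ) := (HminAux.ptraceRight_trace Q).trans htr
  have hdiffpsd : (ρAB - Pp).PosSemidef := by
    have h : ρAB - Pp = T := by rw [← hkey]; abel
    rw [h]; exact hT
  have hp1 : p ≤ 1 := by
    have h0 : 0 ≤ T.trace := HminAux.psd_trace_nonneg hT
    have h1 : Pp.trace + T.trace = 1 := by rw [← Matrix.trace_add, hkey, hρABtr]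
    have h2 : T.trace = 1 - (p : ℂ) := by rw [hPptr] at h1; linear_combination h1
    rw [h2] at h0
    have h3 := (Complex.nonneg_iff.mp h0).1
    simpa using h3
  have hc0 : 0 ≤ c := Real.logb_nonneg one_lt_two (one_le_one_div hp hp1)
  have h2c : (2 : ℝ) ^ c = 1 / p := Real.rpow_logb two_pos (by norm_num) (by positivity)
  set ρh := ptraceRight ((p : ℂ)⁻¹ • Q) with hρhdef
  have hρhPp : ρh = (p : ℂ)⁻¹ • Pp := HminAux.ptraceRight_smul _ _
  have hinvnn : (0 : ℂ) ≤ (p : ℂ)⁻¹ := by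
    rw [show ((p : ℂ))⁻¹ = ((p⁻¹ : ℝ) : ℂ) by push_cast; ring]
    exact Complex.zero_le_real.mpr (inv_nonneg.mpr hp.le)
  have hρhpsd : ρh.PosSemidef := by rw [hρhPp]; exact HminAux.psd_smul hPp hinvnn
  have hρhtr : ρh.trace = 1 := by
    rw [hρhPp, Matrix.trace_smul, hPptr, smul_eq_mul, inv_mul_cancel₀ hp']
  -- nonemptiness of index types
  have hne : Nonempty ((α × β) × γ) := by
    by_contra h
    rw [not_nonempty_iff] at h
    have h0 : ρ.trace = 0 := by simp [Matrix.trace]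
    rw [h0] at hρtr
    exact zero_ne_one hρtr
  obtain ⟨⟨⟨a0, b0⟩, c0⟩⟩ := hne
  haveI : Nonempty α := ⟨a0⟩
  haveI : Nonempty β := ⟨b0⟩
  have hcardα : (1 : ℝ) ≤ (Fintype.card α : ℝ) := by
    exact_mod_cast Fintype.card_pos
  -- generic lower bound on members of a dmax set
  have lbG : ∀ (A : Matrix (α × β) (α × β) ℂ), A.trace = 1 →
      ∀ σ : Matrix β β ℂ, σ.trace = 1 →
      ∀ l ∈ {l : ℝ | ((2 : ℝ) ^ l • ((1 : Matrix α α ℂ) ⊗ₖ σ) - A).PosSemidef},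
        -(Real.logb 2 (Fintype.card α)) ≤ l := by
    intro A hA σ hσ l hl
    have h0 := HminAux.psd_trace_nonneg hl
    have h1 : ((2 : ℝ) ^ l • ((1 : Matrix α α ℂ) ⊗ₖ σ) - A).trace
        = ((((2 : ℝ) ^ l * (Fintype.card α : ℝ) - 1 : ℝ)) : ℂ) := by
      rw [Matrix.trace_sub, Matrix.trace_smul, trace_kronecker, Matrix.trace_one, hσ, hA]
      push_cast [Complex.real_smul]
      ring
    rw [h1, Complex.zero_le_real] at h0
    have hcard0 : (0 : ℝ) < (Fintype.card α : ℝ) := by linarith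
    have h2 : ((Fintype.card α : ℝ))⁻¹ ≤ (2 : ℝ) ^ l := by
      rw [inv_le_iff_one_le_mul₀ hcard0]
      linarith
    have h3 : Real.logb 2 (((Fintype.card α : ℝ))⁻¹) ≤ Real.logb 2 ((2 : ℝ) ^ l) :=
      Real.logb_le_logb_of_le one_lt_two (by positivity) h2
    rwa [Real.logb_inv, Real.logb_rpow (by norm_num) (by norm_num)] at h3
  -- bounded below
  have hbddSh : BddBelow {x : ℝ | ∃ σ : Matrix β β ℂ, σ.PosSemidef ∧ σ.trace = 1 ∧
      x = dmax ρh ((1 : Matrix α α ℂ) ⊗ₖ σ)} := by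
    refine ⟨-(Real.logb 2 (Fintype.card α)), fun x hx => ?_⟩
    obtain ⟨σ, hσpsd, hσtr, rfl⟩ := hx
    by_cases hG : {l : ℝ | ((2 : ℝ) ^ l • ((1 : Matrix α α ℂ) ⊗ₖ σ) - ρh).PosSemidef}.Nonempty
    · exact le_csInf hG (lbG ρh hρhtr σ hσtr)
    · have : dmax ρh ((1 : Matrix α α ℂ) ⊗ₖ σ) = 0 := by
        unfold dmax
        rw [Set.not_nonempty_iff_eq_empty.mp hG, Real.sInf_empty]
      rw [this, neg_nonpos]
      exact Real.logb_nonneg one_lt_two hcardα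
  -- nonemptiness of the set for ρAB
  have hSne : {x : ℝ | ∃ σ : Matrix β β ℂ, σ.PosSemidef ∧ σ.trace = 1 ∧
      x = dmax ρAB ((1 : Matrix α α ℂ) ⊗ₖ σ)}.Nonempty := by
    refine ⟨_, ((Fintype.card β : ℂ))⁻¹ • 1, ?_, ?_, rfl⟩
    · refine HminAux.psd_smul Matrix.PosSemidef.one ?_
      have : ((Fintype.card β : ℂ))⁻¹ = (((Fintype.card β : ℝ)⁻¹ : ℝ) : ℂ) := by push_cast; ring
      rw [this]
      exact Complex.zero_le_real.mpr (by positivity)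
    · rw [Matrix.trace_smul, Matrix.trace_one, smul_eq_mul, inv_mul_cancel₀]
      exact_mod_cast Fintype.card_ne_zero
  -- the main bound
  have hmain : sInf {x : ℝ | ∃ σ : Matrix β β ℂ, σ.PosSemidef ∧ σ.trace = 1 ∧
        x = dmax ρh ((1 : Matrix α α ℂ) ⊗ₖ σ)}
      ≤ sInf {x : ℝ | ∃ σ : Matrix β β ℂ, σ.PosSemidef ∧ σ.trace = 1 ∧
        x = dmax ρAB ((1 : Matrix α α ℂ) ⊗ₖ σ)} + c := by
    rw [← sub_le_iff_le_add]
    refine le_csInf hSne fun x hx => ?_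
    obtain ⟨σ, hσpsd, hσtr, rfl⟩ := hx
    rw [sub_le_iff_le_add]
    by_cases hF : {l : ℝ | ((2 : ℝ) ^ l • ((1 : Matrix α α ℂ) ⊗ₖ σ) - ρAB).PosSemidef}.Nonempty
    · -- push each witness through the measurement
      have hGb : BddBelow {l : ℝ | ((2 : ℝ) ^ l • ((1 : Matrix α α ℂ) ⊗ₖ σ) - ρh).PosSemidef} :=
        ⟨-(Real.logb 2 (Fintype.card α)), lbG ρh hρhtr σ hσtr⟩
      have step : ∀ l ∈ {l : ℝ | ((2 : ℝ) ^ l • ((1 : Matrix α α ℂ) ⊗ₖ σ) - ρAB).PosSemidef},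
          sInf {x : ℝ | ∃ σ : Matrix β β ℂ, σ.PosSemidef ∧ σ.trace = 1 ∧
            x = dmax ρh ((1 : Matrix α α ℂ) ⊗ₖ σ)} ≤ l + c := by
        intro l hl
        have heq : (2 : ℝ) ^ (l + c) • ((1 : Matrix α α ℂ) ⊗ₖ σ) - ρh
            = (p⁻¹ : ℝ) • (((2 : ℝ) ^ l • ((1 : Matrix α α ℂ) ⊗ₖ σ) - ρAB) + (ρAB - Pp)) := by
          have h2lc : (2 : ℝ) ^ (l + c) = p⁻¹ * (2 : ℝ) ^ l := by
            rw [Real.rpow_add two_pos, h2c, one_div]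
            ring
          rw [hρhPp, h2lc]
          ext ij kl
          simp only [Matrix.smul_apply, Matrix.sub_apply, Matrix.add_apply, Complex.real_smul,
            smul_eq_mul]
          push_cast
          ring
        have hmem : ((2 : ℝ) ^ (l + c) • ((1 : Matrix α α ℂ) ⊗ₖ σ) - ρh).PosSemidef := by
          rw [heq]
          exact HminAux.psd_real_smul (Matrix.PosSemidef.add hl hdiffpsd)
            (inv_nonneg.mpr hp.le)
        have h4 : dmax ρh ((1 : Matrix α α ℂ) ⊗ₖ σ) ≤ l + c := csInf_le hGb hmem
        have h5 : sInf {x : ℝ | ∃ σ : Matrix β β ℂ, σ.PosSemidef ∧ σ.trace = 1 ∧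
              x = dmax ρh ((1 : Matrix α α ℂ) ⊗ₖ σ)} ≤ dmax ρh ((1 : Matrix α α ℂ) ⊗ₖ σ) :=
          csInf_le hbddSh ⟨σ, hσpsd, hσtr, rfl⟩
        linarith
      have h6 : sInf {x : ℝ | ∃ σ : Matrix β β ℂ, σ.PosSemidef ∧ σ.trace = 1 ∧
            x = dmax ρh ((1 : Matrix α α ℂ) ⊗ₖ σ)} - c
          ≤ sInf {l : ℝ | ((2 : ℝ) ^ l • ((1 : Matrix α α ℂ) ⊗ₖ σ) - ρAB).PosSemidef} :=
        le_csInf hF fun l hl => by have := step l hl; linarith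
      have h7 : dmax ρAB ((1 : Matrix α α ℂ) ⊗ₖ σ)
          = sInf {l : ℝ | ((2 : ℝ) ^ l • ((1 : Matrix α α ℂ) ⊗ₖ σ) - ρAB).PosSemidef} := rfl
      rw [h7]
      linarith
    · -- the set for ρAB is empty, so its dmax is zero by convention
      have hx0 : dmax ρAB ((1 : Matrix α α ℂ) ⊗ₖ σ) = 0 := by
        unfold dmax
        rw [Set.not_nonempty_iff_eq_empty.mp hF, Real.sInf_empty]
      rw [hx0, zero_add]
      -- it suffices to exhibit an element of the ρh-set which is ≤ c
      by_cases hβ : ∃ b1 b2 : β, b1 ≠ b2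
      · -- β has at least two elements: produce an empty dmax set for ρh
        have hzne : ∃ z : α × β, ρh z z ≠ 0 := by
          by_contra h
          push_neg at h
          have h0 : ρh.trace = 0 := Finset.sum_eq_zero fun z _ => h z
          rw [hρhtr] at h0
          exact one_ne_zero h0
        obtain ⟨⟨a, b⟩, hz⟩ := hzne
        obtain ⟨b1, b2, h12⟩ := hβ
        have hbb' : ∃ b' : β, b' ≠ b := by
          by_cases hb1 : b1 = b
          · exact ⟨b2, fun h => h12 (hb1.trans h.symm)⟩
          · exact ⟨b1, hb1⟩
        obtain ⟨b', hb'⟩ := hbb'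
        set σ' : Matrix β β ℂ := Matrix.diagonal (fun j => if j = b' then 1 else 0) with hσ'def
        have hσ'psd : σ'.PosSemidef := by
          refine Matrix.PosSemidef.diagonal fun j => ?_
          dsimp only
          split_ifs
          · exact zero_le_one
          · exact le_refl 0
        have hσ'tr : σ'.trace = 1 := by
          simp [hσ'def, Matrix.trace, Matrix.diag, Matrix.diagonal_apply_eq]
        have hGempty : {l : ℝ | ((2 : ℝ) ^ l • ((1 : Matrix α α ℂ) ⊗ₖ σ') - ρh).PosSemidef}
            = ∅ := by
          rw [Set.eq_empty_iff_forall_notMem]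
          intro l hl
          have hd := HminAux.psd_diag_nonneg hl (a, b)
          have hentry : ((2 : ℝ) ^ l • ((1 : Matrix α α ℂ) ⊗ₖ σ') - ρh) (a, b) (a, b)
              = - ρh (a, b) (a, b) := by
            simp [Matrix.sub_apply, Matrix.smul_apply, kroneckerMap_apply, one_apply,
              hσ'def, Matrix.diagonal_apply, hb'.symm]
          rw [hentry] at hd
          have hd2 := HminAux.psd_diag_nonneg hρhpsd (a, b)
          exact hz (le_antisymm (neg_nonneg.mp hd) hd2)
        have h0Sh : (0 : ℝ) ∈ {x : ℝ | ∃ σ : Matrix β β ℂ, σ.PosSemidef ∧ σ.trace = 1 ∧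
            x = dmax ρh ((1 : Matrix α α ℂ) ⊗ₖ σ)} := by
          refine ⟨σ', hσ'psd, hσ'tr, ?_⟩
          unfold dmax
          rw [hGempty, Real.sInf_empty]
        have := csInf_le hbddSh h0Sh
        linarith
      · -- β is a subsingleton: the set for ρAB cannot be empty, contradiction
        exfalso
        apply hF
        push_neg at hβ
        have hσ1 : σ = 1 := by
          ext i j
          have hij : i = j := hβ i j
          subst hij
          have htr1 : σ.trace = σ i i := by
            rw [Matrix.trace]
            exact Finset.sum_eq_single_of_mem i (Finset.mem_univ i)
              fun b2 _ hb2 => absurd (hβ b2 i) hb2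
          rw [Matrix.one_apply_eq, ← hσtr, htr1]
        refine ⟨0, ?_⟩
        simp only [Set.mem_setOf_eq, hσ1, Real.rpow_zero, one_smul, one_kronecker_one]
        exact HminAux.one_sub_psd hρABpsd hρABtr
  unfold hmin
  have : sInf {x : ℝ | ∃ σ : Matrix β β ℂ, σ.PosSemidef ∧ σ.trace = 1 ∧
        x = dmax ρh ((1 : Matrix α α ℂ) ⊗ₖ σ)}
      ≤ sInf {x : ℝ | ∃ σ : Matrix β β ℂ, σ.PosSemidef ∧ σ.trace = 1 ∧
        x = dmax ρAB ((1 : Matrix α α ℂ) ⊗ₖ σ)} + c := hmain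
  linarith
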